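/- The total domination game on a graph G without isolated vertices is equivalent to the transversal game on the open neighborhood hypergraph H_G of G: a sequence of vertex choices is legal in the total domination game on G if and only if it is legal in the transversal game on H_G, and consequently γ_tg(G) = τ_g(H_G). -/

import Mathlib

open scoped Classical

namespace GameTD

/-- A move `v` is legal w.r.t. selected set `S` in the total domination game:
`v` totally dominates some vertex not yet totally dominated. -/
def Legal {V : Type*} (G : SimpleGraph V) (S : Finset V) (v : V) : Prop :=
  ∃ w, G.Adj v w ∧ ∀ u ∈ S, ¬ G.Adj u w

theorem Legal.not_mem {V : Type*} {G : SimpleGraph V} {S : Finset V} {v : V}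
    (h : Legal G S v) : v ∉ S := by
  rcases h with ⟨w, hadj, hw⟩
  intro hv
  exact hw v hv hadj

/-- The value of the total domination game from position `S`, with `b = true`
meaning Dominator (the minimizer) to move. The game ends when no legal move exists. -/
noncomputable def val {V : Type*} [Fintype V] (G : SimpleGraph V) (b : Bool) (S : Finset V) : ℕ :=
  let L := Finset.univ.filter (fun v => Legal G S v)
  if h : L.Nonempty then
    have hL : L.attach.Nonempty := h.attach
    if b then
      1 + L.attach.inf' hL (fun v => val G false (insert v.1 S))
    else
      1 + L.attach.sup' hL (fun v => val G true (insert v.1 S))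
  else 0
termination_by (Finset.univ \ S).card
decreasing_by
  all_goals {
    have hv : Legal G S v.1 := by
      have := v.2
      exact (Finset.mem_filter.mp v.2).2
    have hvS : v.1 ∉ S := hv.not_mem
    apply Finset.card_lt_card
    constructor
    · intro x hx
      simp only [Finset.mem_sdiff] at hx ⊢
      exact ⟨hx.1, fun hmem => hx.2 (Finset.mem_insert_of_mem hmem)⟩
    · intro hsub
      have : v.1 ∈ Finset.univ \ S := by
        simp [hvS]
      have := hsub this
      simp at this
  }

/-- The game total domination number: Dominator starts from the empty position. -/
noncomputable def gammaTG {V : Type*} [Fintype V] (G : SimpleGraph V) : ℕ :=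
  val G true ∅

end GameTD


open scoped Classical

namespace TransversalGame

/-- A move `v` is legal w.r.t. the selected set `S` in the transversal game on a
hypergraph with edge set `E`: `v` lies in some edge disjoint from `S`. -/
def Legal {V : Type*} (E : Finset (Finset V)) (S : Finset V) (v : V) : Prop :=
  ∃ e ∈ E, v ∈ e ∧ ∀ u ∈ S, u ∉ e

theorem Legal.not_mem {V : Type*} {E : Finset (Finset V)} {S : Finset V} {v : V}
    (h : Legal E S v) : v ∉ S := by
  rcases h with ⟨e, _, hv, hd⟩
  exact fun hvS => hd v hvS hv

/-- Value of the transversal game from position `S`; `b = true` means Edge-hitter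
(the minimizer) to move. The game ends when the selected set is a transversal,
equivalently when no legal move exists. -/
noncomputable def val {V : Type*} [Fintype V] (E : Finset (Finset V)) (b : Bool) (S : Finset V) : ℕ :=
  let L := Finset.univ.filter (fun v => Legal E S v)
  if h : L.Nonempty then
    have hL : L.attach.Nonempty := h.attach
    if b then
      1 + L.attach.inf' hL (fun v => val E false (insert v.1 S))
    else
      1 + L.attach.sup' hL (fun v => val E true (insert v.1 S))
  else 0
termination_by (Finset.univ \ S).card
decreasing_by
  all_goals {
    have hv : Legal E S v.1 := (Finset.mem_filter.mp v.2).2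
    have hvS : v.1 ∉ S := hv.not_mem
    apply Finset.card_lt_card
    constructor
    · intro x hx
      simp only [Finset.mem_sdiff] at hx ⊢
      exact ⟨hx.1, fun hmem => hx.2 (Finset.mem_insert_of_mem hmem)⟩
    · intro hsub
      have hvmem : v.1 ∈ Finset.univ \ S := by simp [hvS]
      have := hsub hvmem
      simp at this
  }

/-- Edge-hitter-start game transversal number starting from `A`. -/
noncomputable def tauG {V : Type*} [Fintype V] (E : Finset (Finset V)) (A : Finset V) : ℕ :=
  val E true A

/-- Staller-start game transversal number starting from `A`. -/
noncomputable def tauG' {V : Type*} [Fintype V] (E : Finset (Finset V)) (A : Finset V) : ℕ :=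
  val E false A

end TransversalGame

/-- The open neighborhood hypergraph of `G`: its edges are the open neighborhoods
of the vertices of `G`. -/
noncomputable def openNeighborhoodHypergraph {V : Type*} [Fintype V]
    (G : SimpleGraph V) : Finset (Finset V) :=
  Finset.univ.image (fun x => G.neighborFinset x)


private lemma onh_legal_iff {V : Type*} [Fintype V] (G : SimpleGraph V)
    (S : Finset V) (v : V) :
    GameTD.Legal G S v ↔ TransversalGame.Legal (openNeighborhoodHypergraph G) S v := by
  constructor
  · rintro ⟨w, hadj, hw⟩
    refine ⟨G.neighborFinset w, ?_, ?_, ?_⟩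
    · simp [openNeighborhoodHypergraph]
    · simpa using hadj.symm
    · intro u hu hmem
      exact hw u hu ((SimpleGraph.mem_neighborFinset _ _ _).mp hmem).symm
  · rintro ⟨e, he, hv, hd⟩
    simp only [openNeighborhoodHypergraph, Finset.mem_image] at he
    obtain ⟨x, -, rfl⟩ := he
    refine ⟨x, ((SimpleGraph.mem_neighborFinset _ _ _).mp hv).symm, ?_⟩
    intro u hu hadj
    exact hd u hu ((SimpleGraph.mem_neighborFinset _ _ _).mpr hadj.symm)

private lemma onh_filter_eq {V : Type*} [Fintype V] (G : SimpleGraph V) (S : Finset V) :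
    Finset.univ.filter (fun v => GameTD.Legal G S v) =
    Finset.univ.filter (fun v => TransversalGame.Legal (openNeighborhoodHypergraph G) S v) := by
  apply Finset.filter_congr
  intro v _
  simpa using onh_legal_iff G S v

private lemma attach_inf'_eq {α β : Type*} [SemilatticeInf β] {s t : Finset α}
    (hst : s = t) (hs : s.attach.Nonempty) (ht : t.attach.Nonempty) {f g : α → β}
    (hfg : ∀ x ∈ s, f x = g x) :
    s.attach.inf' hs (fun v => f v.1) = t.attach.inf' ht (fun v => g v.1) := by
  subst hst
  exact Finset.inf'_congr hs rfl (fun v _ => hfg v.1 v.2)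

private lemma attach_sup'_eq {α β : Type*} [SemilatticeSup β] {s t : Finset α}
    (hst : s = t) (hs : s.attach.Nonempty) (ht : t.attach.Nonempty) {f g : α → β}
    (hfg : ∀ x ∈ s, f x = g x) :
    s.attach.sup' hs (fun v => f v.1) = t.attach.sup' ht (fun v => g v.1) := by
  subst hst
  exact Finset.sup'_congr hs rfl (fun v _ => hfg v.1 v.2)

private lemma onh_val_eq {V : Type*} [Fintype V] (G : SimpleGraph V) :
    ∀ (n : ℕ) (S : Finset V), (Finset.univ \ S).card ≤ n → ∀ b,
      GameTD.val G b S = TransversalGame.val (openNeighborhoodHypergraph G) b S := by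
  intro n
  induction n with
  | zero =>
    intro S hS b
    have hSu : ∀ v : V, v ∈ S := by
      intro v
      by_contra hv
      have : v ∈ Finset.univ \ S := by simp [hv]
      have := Finset.card_pos.mpr ⟨v, this⟩
      omega
    have h1 : Finset.univ.filter (fun v => GameTD.Legal G S v) = ∅ := by
      apply Finset.filter_eq_empty_iff.mpr
      intro v _ hl
      exact hl.not_mem (hSu v)
    have h2 : Finset.univ.filter
        (fun v => TransversalGame.Legal (openNeighborhoodHypergraph G) S v) = ∅ := by
      rw [← onh_filter_eq]; exact h1
    rw [GameTD.val, TransversalGame.val]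
    simp [h1, h2]
  | succ n ih =>
    intro S hS b
    have hfe := onh_filter_eq G S
    have key : ∀ x ∈ Finset.univ.filter (fun v => GameTD.Legal G S v), ∀ b',
        GameTD.val G b' (insert x S) =
        TransversalGame.val (openNeighborhoodHypergraph G) b' (insert x S) := by
      intro x hx b'
      have hxl : GameTD.Legal G S x := (Finset.mem_filter.mp hx).2
      have hxS : x ∉ S := hxl.not_mem
      have hcard : (Finset.univ \ insert x S).card < (Finset.univ \ S).card := by
        apply Finset.card_lt_card
        constructor
        · intro y hy
          simp only [Finset.mem_sdiff, Finset.mem_insert, not_or] at hy ⊢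
          exact ⟨hy.1, hy.2.2⟩
        · intro hsub
          have hxm : x ∈ Finset.univ \ S := by simp [hxS]
          have := hsub hxm
          simp at this
      exact ih (insert x S) (by omega) b'
    rw [GameTD.val, TransversalGame.val]
    by_cases h : (Finset.univ.filter (fun v => GameTD.Legal G S v)).Nonempty
    · have h2 : (Finset.univ.filter
          (fun v => TransversalGame.Legal (openNeighborhoodHypergraph G) S v)).Nonempty := by
        rw [← hfe]; exact h
      rw [dif_pos h, dif_pos h2]
      cases b with
      | true =>
        simp only [reduceIte]
        congr 1
        exact attach_inf'_eq hfe h.attach h2.attach (fun x hx => key x hx false)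
      | false =>
        simp only [Bool.false_eq_true, reduceIte]
        congr 1
        exact attach_sup'_eq hfe h.attach h2.attach (fun x hx => key x hx true)
    · have h2 : ¬ (Finset.univ.filter
          (fun v => TransversalGame.Legal (openNeighborhoodHypergraph G) S v)).Nonempty := by
        rw [← hfe]; exact h
      rw [dif_neg h, dif_neg h2]

/-- The total domination game on an isolate-free graph `G` is the transversal game
on the open neighborhood hypergraph `H_G`: a move is legal in one game iff it is
legal in the other (from any position), and γ_tg(G) = τ_g(H_G). -/
theorem totalDominationGame_eq_transversalGame {V : Type*} [Fintype V]
    (G : SimpleGraph V) (h_no_isolated_vertex : ∀ v : V, ∃ w, G.Adj v w) :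
    (∀ (S : Finset V) (v : V),
      GameTD.Legal G S v ↔ TransversalGame.Legal (openNeighborhoodHypergraph G) S v) ∧
    GameTD.gammaTG G = TransversalGame.tauG (openNeighborhoodHypergraph G) ∅ := by
  
  constructor
  · intro S v
    exact onh_legal_iff G S v
  · exact onh_val_eq G (Finset.univ \ (∅ : Finset V)).card ∅ le_rfl true
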